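/- Let T = (V, E) be a tree on n vertices. There exists an assignment of positive integer weights w : E → {1, 2, ..., C·n⁶} (for an absolute constant C) such that any two distinct simple paths P_1, P_2 in T have distinct total edge-weights: Σ_{e∈P_1} w(e) ≠ Σ_{e∈P_2} w(e). -/

import Mathlib

open SimpleGraph Finset

section Aux
variable {V : Type*} {G : SimpleGraph V}

/-- In a path, any two edges containing the start vertex are equal. -/
lemma start_edge_unique : ∀ {u v : V} (p : G.Walk u v), p.IsPath →
    ∀ e₁ ∈ p.edges, ∀ e₂ ∈ p.edges, u ∈ e₁ → u ∈ e₂ → e₁ = e₂ := by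
  intro u v p
  induction p with
  | nil => intro _ e₁ h1; simp at h1
  | @cons u b v hadj q ih =>
    intro hp e₁ h1 e₂ h2 hu1 hu2
    rw [SimpleGraph.Walk.edges_cons, List.mem_cons] at h1 h2
    have hkey : ∀ e ∈ q.edges, u ∈ e → False := by
      intro e he hue
      obtain ⟨y, rfl⟩ := Sym2.mem_iff_exists.mp hue
      exact ((SimpleGraph.Walk.cons_isPath_iff _ _).mp hp).2
        (q.fst_mem_support_of_mem_edges he)
    rcases h1 with rfl | h1
    · rcases h2 with rfl | h2
      · rfl
      · exact (hkey _ h2 hu2).elim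
    · exact (hkey _ h1 hu1).elim

/-- An internal vertex of a path lies on two distinct edges of the path. -/
lemma internal_two_edges : ∀ {u v : V} (q : G.Walk u v), q.IsPath →
    ∀ x ∈ q.support, x ≠ u → x ≠ v →
    ∃ e₁ ∈ q.edges, ∃ e₂ ∈ q.edges, x ∈ e₁ ∧ x ∈ e₂ ∧ e₁ ≠ e₂ := by
  intro u v q
  induction q with
  | nil =>
    intro _ x hx hxu _
    simp only [SimpleGraph.Walk.support_nil, List.mem_singleton] at hx
    exact (hxu hx).elim
  | @cons u b v hadj q ih =>
    intro hp x hx hxu hxv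
    have hq := ((SimpleGraph.Walk.cons_isPath_iff _ _).mp hp).1
    have hus := ((SimpleGraph.Walk.cons_isPath_iff _ _).mp hp).2
    rw [SimpleGraph.Walk.support_cons, List.mem_cons] at hx
    rcases hx with rfl | hx
    · exact (hxu rfl).elim
    by_cases hxb : x = b
    · subst hxb
      cases q with
      | nil => exact (hxv rfl).elim
      | @cons _ y _ hadj2 q2 =>
        refine ⟨s(u, x), by simp, s(x, y), by simp, by simp, by simp, ?_⟩
        intro hcontra
        rw [Sym2.eq_iff] at hcontra
        rcases hcontra with ⟨h1, _⟩ | ⟨h1, _⟩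
        · exact hadj.ne h1
        · subst h1
          exact hus (by simp)
    · obtain ⟨e₁, h1, e₂, h2, m1, m2, hne⟩ := ih hq x hx hxb hxv
      exact ⟨e₁, by simp [h1], e₂, by simp [h2], m1, m2, hne⟩

/-- A nontrivial path has distinct endpoints. -/
lemma ends_ne {u v : V} {p : G.Walk u v} (hp : p.IsPath) (hl : 0 < p.length) :
    u ≠ v := by
  cases p with
  | nil => simp at hl
  | @cons _ b _ hadj q =>
    intro h
    subst h
    exact ((SimpleGraph.Walk.cons_isPath_iff _ _).mp hp).2 q.end_mem_support

/-- Core lemma: if the start of `p` is not an endpoint of `q`, the edge sets differ. -/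
lemma diff_edge_core {u v u' v' : V} {p : G.Walk u v} {q : G.Walk u' v'}
    (hp : p.IsPath) (hq : q.IsPath) (hpl : 0 < p.length)
    (hu : u ≠ u') (hu2 : u ≠ v')
    (hsub : ∀ e, e ∈ p.edges ↔ e ∈ q.edges) : False := by
  cases p with
  | nil => simp at hpl
  | @cons _ b _ hadj p2 =>
    have h1 : s(u, b) ∈ q.edges := (hsub _).mp (by simp)
    have husup : u ∈ q.support := q.fst_mem_support_of_mem_edges h1
    obtain ⟨e₁, he₁, e₂, he₂, m1, m2, hne⟩ :=
      internal_two_edges q hq u husup hu hu2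
    exact hne (start_edge_unique _ hp e₁ ((hsub e₁).mpr he₁) e₂ ((hsub e₂).mpr he₂) m1 m2)

/-- Two distinct nontrivial paths in a graph have different edge sets. -/
lemma exists_diff_edge {u v u' v' : V} {p : G.Walk u v} {q : G.Walk u' v'}
    (hp : p.IsPath) (hq : q.IsPath) (hpl : 0 < p.length) (hql : 0 < q.length)
    (hne : s(u, v) ≠ s(u', v')) :
    ∃ e, (e ∈ p.edges ∧ e ∉ q.edges) ∨ (e ∈ q.edges ∧ e ∉ p.edges) := by
  by_contra h
  push_neg at h
  have hsub : ∀ e, e ∈ p.edges ↔ e ∈ q.edges := by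
    intro e
    constructor
    · exact (h e).1
    · exact (h e).2
  have huv : u ≠ v := ends_ne hp hpl
  -- one of u, v is not an endpoint of q
  have hcase : (u ≠ u' ∧ u ≠ v') ∨ (v ≠ u' ∧ v ≠ v') := by
    by_contra hc
    push_neg at hc
    obtain ⟨hc1, hc2⟩ := hc
    by_cases h1 : u = u'
    · have h2 : v ≠ u' := fun h => huv (h1.trans h.symm)
      exact hne (by rw [h1, hc2 h2])
    · have h1' : u = v' := hc1 h1
      by_cases h2 : v = u'
      · exact hne (by rw [h1', h2, Sym2.eq_swap])
      · exact huv (h1'.trans (hc2 h2).symm)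
  rcases hcase with ⟨h1, h2⟩ | ⟨h1, h2⟩
  · exact diff_edge_core hp hq hpl h1 h2 hsub
  · apply diff_edge_core hp.reverse hq (by rwa [SimpleGraph.Walk.length_reverse]) h1 h2
    intro e
    rw [SimpleGraph.Walk.edges_reverse, List.mem_reverse]
    exact hsub e

end Aux

/-- Unique-length paths in trees: every tree on `n` vertices admits edge
weights in `{1,...,n⁶}` under which any two distinct nontrivial simple paths
have distinct total weights. -/
theorem tree_unique_path_weights {V : Type*} [Fintype V] (G : SimpleGraph V)
    (hG : G.IsTree) :
    ∃ w : Sym2 V → ℕ,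
      (∀ e ∈ G.edgeSet, w e ∈ Finset.Icc 1 (Fintype.card V ^ 6)) ∧
      ∀ (u v u' v' : V) (p : G.Walk u v) (q : G.Walk u' v'),
        p.IsPath → q.IsPath → 0 < p.length → 0 < q.length →
        s(u, v) ≠ s(u', v') → (p.edges.map w).sum ≠ (q.edges.map w).sum := by
  classical
  set n := Fintype.card V with hn
  set N := n ^ 6 with hNdef
  by_cases hD : G.edgeFinset = ∅
  · refine ⟨fun _ => 1, ?_, ?_⟩
    · intro e he
      rw [← SimpleGraph.mem_edgeFinset] at he
      simp [hD] at he
    · intro u v u' v' p q hp hq hpl hql hne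
      exfalso
      cases p with
      | nil => simp at hpl
      | @cons _ b _ hadj p2 =>
        have : s(u, b) ∈ G.edgeFinset := SimpleGraph.mem_edgeFinset.mpr ((G.mem_edgeSet).mpr hadj)
        simp [hD] at this
  · -- main case
    obtain ⟨e₀, he₀⟩ := Finset.nonempty_iff_ne_empty.mpr hD
    have hadj : ∃ a b : V, G.Adj a b := by
      revert he₀
      induction e₀ using Sym2.ind with
      | _ a b => exact fun h => ⟨a, b, (G.mem_edgeSet).mp (SimpleGraph.mem_edgeFinset.mp h)⟩
    obtain ⟨a, b, hab⟩ := hadj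
    have hn2 : 1 < n := Fintype.one_lt_card_iff_nontrivial.mpr ⟨⟨a, b, hab.ne⟩⟩
    set D := G.edgeFinset with hDdef
    set m := D.card with hmdef
    have hm : 1 ≤ m := Finset.card_pos.mpr ⟨e₀, he₀⟩
    -- canonical paths
    have pathex : ∀ u v : V, ∃ p : G.Walk u v, p.IsPath :=
      fun u v => (hG.existsUnique_path u v).exists
    choose P hP using pathex
    have Puniq : ∀ {u v : V} (p : G.Walk u v), p.IsPath → p = P u v :=
      fun p hp => (hG.existsUnique_path _ _).unique hp (hP _ _)
    have Plen : ∀ {u v : V}, u ≠ v → 0 < (P u v).length := by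
      intro u v huv
      rcases Nat.eq_zero_or_pos (P u v).length with h | h
      · exact (huv (SimpleGraph.Walk.eq_of_length_eq_zero h)).elim
      · exact h
    -- weight spaces
    set WS : Finset (Sym2 V) → Finset (Sym2 V → ℕ) := fun S =>
      Fintype.piFinset (fun e => if e ∈ S then Finset.Icc 1 N else {1}) with hWSdef
    have cardWS : ∀ S : Finset (Sym2 V), (WS S).card = N ^ S.card := by
      intro S
      rw [hWSdef]
      rw [Fintype.card_piFinset]
      have hc : ∀ e : Sym2 V,
          ((if e ∈ S then Finset.Icc 1 N else {1}).card) = if e ∈ S then N else 1 := by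
        intro e; split <;> simp
      simp_rw [hc]
      rw [Finset.prod_ite_mem Finset.univ S (fun _ => N), Finset.univ_inter,
        Finset.prod_const]
    have hNpos : 0 < N := by positivity
    -- sums as finset sums
    have sum_eq : ∀ (w : Sym2 V → ℕ) {x y : V} (p : G.Walk x y), p.IsPath →
        (p.edges.map w).sum = ∑ e ∈ p.edges.toFinset, w e :=
      fun w x y p hp => (List.sum_toFinset w hp.isTrail.edges_nodup).symm
    -- constraint set
    set T : Finset ((V × V) × (V × V)) := Finset.univ.filter
      (fun t => t.1.1 ≠ t.1.2 ∧ t.2.1 ≠ t.2.2 ∧ s(t.1.1, t.1.2) ≠ s(t.2.1, t.2.2))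
      with hTdef
    -- per-constraint bound
    have inner : ∀ (A B : List (Sym2 V)) (e : Sym2 V), A.Nodup → e ∈ D →
        e ∈ A → e ∉ B →
        ((WS D).filter (fun w => (A.map w).sum = (B.map w).sum)).card ≤ N ^ (m - 1) := by
      intro A B e hA heD heA heB
      have hcard : (WS (D.erase e)).card = N ^ (m - 1) := by
        rw [cardWS, Finset.card_erase_of_mem heD]
      rw [← hcard]
      apply Finset.card_le_card_of_injOn (fun w => Function.update w e 1)
      · intro w hw
        rw [Finset.mem_coe, Finset.mem_filter] at hw
        have hw1 := Fintype.mem_piFinset.mp hw.1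
        apply Fintype.mem_piFinset.mpr
        intro i
        by_cases hie : i = e
        · subst hie
          rw [if_neg (Finset.notMem_erase _ _)]
          simp [Function.update_self]
        · beta_reduce
          rw [Function.update_of_ne hie]
          have hwi := hw1 i
          by_cases hiD : i ∈ D
          · rw [if_pos (Finset.mem_erase.mpr ⟨hie, hiD⟩)]
            rwa [if_pos hiD] at hwi
          · rw [if_neg (fun hc => hiD (Finset.mem_erase.mp hc).2)]
            rwa [if_neg hiD] at hwi
      · intro w₁ hw₁ w₂ hw₂ heq
        simp only [Finset.mem_coe, Finset.mem_filter] at hw₁ hw₂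
        have hoff : ∀ i, i ≠ e → w₁ i = w₂ i := by
          intro i hi
          have hci : Function.update w₁ e 1 i = Function.update w₂ e 1 i := congrFun heq i
          rwa [Function.update_of_ne hi, Function.update_of_ne hi] at hci
        funext i
        by_cases hie : i = e
        · subst hie
          -- B-sums agree
          have hB : (B.map w₁).sum = (B.map w₂).sum := by
            congr 1
            apply List.map_congr_left
            intro x hx
            exact hoff x (fun h => heB (h ▸ hx))
          -- decompose A-sums
          have hiA : i ∈ A.toFinset := List.mem_toFinset.mpr heA
          have hR : ∑ x ∈ A.toFinset.erase i, w₁ x = ∑ x ∈ A.toFinset.erase i, w₂ x := by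
            apply Finset.sum_congr rfl
            intro x hx
            exact hoff x (Finset.mem_erase.mp hx).1
          have hd1 : (A.map w₁).sum = w₁ i + ∑ x ∈ A.toFinset.erase i, w₁ x := by
            rw [← List.sum_toFinset w₁ hA, ← Finset.add_sum_erase _ w₁ hiA]
          have hd2 : (A.map w₂).sum = w₂ i + ∑ x ∈ A.toFinset.erase i, w₂ x := by
            rw [← List.sum_toFinset w₂ hA, ← Finset.add_sum_erase _ w₂ hiA]
          have : w₁ i + ∑ x ∈ A.toFinset.erase i, w₁ x
              = w₂ i + ∑ x ∈ A.toFinset.erase i, w₁ x := by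
            rw [← hd1, hw₁.2, hB, ← hw₂.2, hd2, hR]
          exact Nat.add_right_cancel this
        · exact hoff i hie
    have key : ∀ t ∈ T, ((WS D).filter
        (fun w => ((P t.1.1 t.1.2).edges.map w).sum
          = ((P t.2.1 t.2.2).edges.map w).sum)).card ≤ N ^ (m - 1) := by
      intro t ht
      obtain ⟨⟨u, v⟩, u', v'⟩ := t
      rw [hTdef, Finset.mem_filter] at ht
      obtain ⟨-, h1, h2, h3⟩ := ht
      obtain ⟨e, he⟩ := exists_diff_edge (hP u v) (hP u' v') (Plen h1) (Plen h2) h3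
      rcases he with ⟨heA, heB⟩ | ⟨heA, heB⟩
      · exact inner _ _ e (hP u v).isTrail.edges_nodup
          (SimpleGraph.mem_edgeFinset.mpr ((P u v).edges_subset_edgeSet heA)) heA heB
      · have := inner _ _ e (hP u' v').isTrail.edges_nodup
          (SimpleGraph.mem_edgeFinset.mpr ((P u' v').edges_subset_edgeSet heA)) heA heB
        refine le_trans (le_of_eq ?_) this
        congr 1
        apply Finset.filter_congr
        intro w _
        simp only [eq_comm]
    -- union bound
    have hsubset : (WS D).filter (fun w => ∃ t ∈ T,
          ((P t.1.1 t.1.2).edges.map w).sum = ((P t.2.1 t.2.2).edges.map w).sum)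
        ⊆ T.biUnion (fun t => (WS D).filter
          (fun w => ((P t.1.1 t.1.2).edges.map w).sum
            = ((P t.2.1 t.2.2).edges.map w).sum)) := by
      intro w hw
      rw [Finset.mem_filter] at hw
      obtain ⟨hwW, t, ht, hb⟩ := hw
      exact Finset.mem_biUnion.mpr ⟨t, ht, Finset.mem_filter.mpr ⟨hwW, hb⟩⟩
    have hTcard : T.card ≤ n ^ 4 := by
      calc T.card ≤ (Finset.univ : Finset ((V × V) × (V × V))).card :=
            Finset.card_le_card (Finset.filter_subset _ _)
        _ = n ^ 4 := by
            simp [Finset.card_univ, hn]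
            ring
    have hcardbad : ((WS D).filter (fun w => ∃ t ∈ T,
          ((P t.1.1 t.1.2).edges.map w).sum
            = ((P t.2.1 t.2.2).edges.map w).sum)).card < (WS D).card := by
      calc ((WS D).filter _).card
          ≤ (T.biUnion _).card := Finset.card_le_card hsubset
        _ ≤ ∑ t ∈ T, ((WS D).filter
              (fun w => ((P t.1.1 t.1.2).edges.map w).sum
                = ((P t.2.1 t.2.2).edges.map w).sum)).card := Finset.card_biUnion_le
        _ ≤ ∑ _t ∈ T, N ^ (m - 1) := Finset.sum_le_sum key
        _ = T.card * N ^ (m - 1) := by rw [Finset.sum_const, smul_eq_mul]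
        _ ≤ n ^ 4 * N ^ (m - 1) := Nat.mul_le_mul_right _ hTcard
        _ < N * N ^ (m - 1) := by
            have hppos : 0 < N ^ (m - 1) := Nat.pow_pos hNpos
            have hlt : n ^ 4 < N := by
              rw [hNdef]
              exact Nat.pow_lt_pow_right hn2 (by omega)
            exact (Nat.mul_lt_mul_right hppos).mpr hlt
        _ = N ^ m := by
            rw [← pow_succ']
            congr 1
            omega
        _ = (WS D).card := (cardWS D).symm
    obtain ⟨w, hwW, hwbad⟩ : ∃ w ∈ WS D, ¬ ∃ t ∈ T,
        ((P t.1.1 t.1.2).edges.map w).sum = ((P t.2.1 t.2.2).edges.map w).sum := by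
      by_contra hcon
      push_neg at hcon
      have hall : (WS D).filter (fun w => ∃ t ∈ T,
          ((P t.1.1 t.1.2).edges.map w).sum
            = ((P t.2.1 t.2.2).edges.map w).sum) = WS D := by
        apply Finset.filter_true_of_mem
        intro w hw
        obtain ⟨t, ht, h⟩ := hcon w hw
        exact ⟨t, ht, h⟩
      rw [hall] at hcardbad
      exact lt_irrefl _ hcardbad
    refine ⟨w, ?_, ?_⟩
    · intro e he
      have hwe := Fintype.mem_piFinset.mp hwW e
      rwa [if_pos (SimpleGraph.mem_edgeFinset.mpr he)] at hwe
    · intro u v u' v' p q hp hq hpl hql hne hsum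
      apply hwbad
      refine ⟨((u, v), (u', v')), ?_, ?_⟩
      · rw [hTdef, Finset.mem_filter]
        exact ⟨Finset.mem_univ _, ends_ne hp hpl, ends_ne hq hql, hne⟩
      · have h1 := Puniq p hp
        have h2 := Puniq q hq
        rw [← h1, ← h2] at *
        exact hsum
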